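/- Let m > 0, let c = V''(x₀) > 0, let ω = √(c/m), and let ξ₁₀, ξ₂₀ ∈ ℝ. Define ξ¹(t) = (1/c)·[√m·ξ₁₀·√c·sin(ωt) − ξ₂₀·cos(ωt) + ξ₂₀] and ξ²(t) = m·ξ₁₀·(cos(ωt) − 1) + (√m·ξ₂₀/√c)·sin(ωt). Then ξ¹ and ξ² are twice differentiable and satisfy the geodesic deviation equations (ξ¹)''(t) − (1/m)·(ξ²)'(t) = 0 and (ξ²)''(t) + c·(ξ¹)'(t) = 0 for all t ∈ ℝ, together with the initial conditions ξ¹(0) = 0, ξ²(0) = 0, (ξ¹)'(0) = ξ₁₀, (ξ²)'(0) = ξ₂₀. -/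

import Mathlib

open Real

private lemma sincos_hasDerivAt (ω p q r t : ℝ) :
    HasDerivAt (fun s => p * Real.sin (ω * s) + q * Real.cos (ω * s) + r)
      ((-q * ω) * Real.sin (ω * t) + (p * ω) * Real.cos (ω * t) + 0) t := by
  have hl : HasDerivAt (fun s : ℝ => ω * s) ω t := by
    simpa using (hasDerivAt_id t).const_mul ω
  have hs := (Real.hasDerivAt_sin (ω * t)).comp t hl
  have hc := (Real.hasDerivAt_cos (ω * t)).comp t hl
  have h := ((hs.const_mul p).add (hc.const_mul q)).add_const r
  refine h.congr_deriv ?_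
  ring

/-- The explicit solution of the geodesic deviation equations of the point-particle
Hamiltonian system at a critical point: with `m > 0`, `c = V''(x₀) > 0`, `ω = √(c/m)`,
the functions `ξ¹(t) = (1/c)[√m·ξ₁₀·√c·sin(ωt) − ξ₂₀·cos(ωt) + ξ₂₀]` and
`ξ²(t) = m·ξ₁₀·(cos(ωt) − 1) + (√m·ξ₂₀/√c)·sin(ωt)` are twice differentiable, satisfy
`(ξ¹)'' − (1/m)(ξ²)' = 0`, `(ξ²)'' + c·(ξ¹)' = 0`, and the initial conditions
`ξ¹(0) = 0`, `ξ²(0) = 0`, `(ξ¹)'(0) = ξ₁₀`, `(ξ²)'(0) = ξ₂₀`. -/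
theorem geodesic_deviation_solution
    (m c : ℝ) (hm : 0 < m) (hc : 0 < c)
    (ω : ℝ) (hω : ω = Real.sqrt (c / m))
    (ξ10 ξ20 : ℝ) (ξ1 ξ2 : ℝ → ℝ)
    (hξ1 : ∀ t, ξ1 t = (1 / c) *
      (Real.sqrt m * ξ10 * Real.sqrt c * Real.sin (ω * t)
        - ξ20 * Real.cos (ω * t) + ξ20))
    (hξ2 : ∀ t, ξ2 t = m * ξ10 * (Real.cos (ω * t) - 1)
        + (Real.sqrt m * ξ20 / Real.sqrt c) * Real.sin (ω * t)) :
    (∀ t : ℝ, DifferentiableAt ℝ ξ1 t ∧ DifferentiableAt ℝ (deriv ξ1) t) ∧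
    (∀ t : ℝ, DifferentiableAt ℝ ξ2 t ∧ DifferentiableAt ℝ (deriv ξ2) t) ∧
    (∀ t : ℝ, deriv (deriv ξ1) t - (1 / m) * deriv ξ2 t = 0) ∧
    (∀ t : ℝ, deriv (deriv ξ2) t + c * deriv ξ1 t = 0) ∧
    ξ1 0 = 0 ∧ ξ2 0 = 0 ∧ deriv ξ1 0 = ξ10 ∧ deriv ξ2 0 = ξ20 := by
  have hsm : Real.sqrt m * Real.sqrt m = m := Real.mul_self_sqrt hm.le
  have hsc : Real.sqrt c * Real.sqrt c = c := Real.mul_self_sqrt hc.le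
  have hsm0 : Real.sqrt m ≠ 0 := ne_of_gt (Real.sqrt_pos.mpr hm)
  have hsc0 : Real.sqrt c ≠ 0 := ne_of_gt (Real.sqrt_pos.mpr hc)
  have hωm : Real.sqrt m * ω = Real.sqrt c := by
    rw [hω, Real.sqrt_div hc.le, mul_comm, div_mul_cancel₀ _ hsm0]
  have hω2 : m * (ω * ω) = c := by
    have h : (Real.sqrt m * ω) * (Real.sqrt m * ω) = Real.sqrt c * Real.sqrt c := by
      rw [hωm]
    linear_combination h + hsc - (ω * ω) * hsm
  have hA : Real.sqrt m * Real.sqrt c * ω = c := by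
    calc Real.sqrt m * Real.sqrt c * ω = Real.sqrt c * (Real.sqrt m * ω) := by ring
    _ = Real.sqrt c * Real.sqrt c := by rw [hωm]
    _ = c := hsc
  -- coefficients
  set p1 : ℝ := (1 / c) * (Real.sqrt m * ξ10 * Real.sqrt c) with hp1
  set q1 : ℝ := -(1 / c) * ξ20 with hq1
  set r1 : ℝ := (1 / c) * ξ20 with hr1
  set p2 : ℝ := Real.sqrt m * ξ20 / Real.sqrt c with hp2
  set q2 : ℝ := m * ξ10 with hq2
  set r2 : ℝ := -(m * ξ10) with hr2
  have h1 : ξ1 = fun t => p1 * Real.sin (ω * t) + q1 * Real.cos (ω * t) + r1 :=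
    funext fun t => by rw [hξ1]; ring
  have h2 : ξ2 = fun t => p2 * Real.sin (ω * t) + q2 * Real.cos (ω * t) + r2 :=
    funext fun t => by rw [hξ2]; ring
  have D1 : ∀ t, HasDerivAt ξ1
      ((-q1 * ω) * Real.sin (ω * t) + (p1 * ω) * Real.cos (ω * t) + 0) t := by
    intro t; rw [h1]; exact sincos_hasDerivAt ω p1 q1 r1 t
  have D2 : ∀ t, HasDerivAt ξ2
      ((-q2 * ω) * Real.sin (ω * t) + (p2 * ω) * Real.cos (ω * t) + 0) t := by
    intro t; rw [h2]; exact sincos_hasDerivAt ω p2 q2 r2 t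
  have dξ1 : deriv ξ1 = fun t =>
      (-q1 * ω) * Real.sin (ω * t) + (p1 * ω) * Real.cos (ω * t) + 0 :=
    funext fun t => (D1 t).deriv
  have dξ2 : deriv ξ2 = fun t =>
      (-q2 * ω) * Real.sin (ω * t) + (p2 * ω) * Real.cos (ω * t) + 0 :=
    funext fun t => (D2 t).deriv
  have DD1 : ∀ t, HasDerivAt (deriv ξ1)
      ((-(p1 * ω) * ω) * Real.sin (ω * t) + ((-q1 * ω) * ω) * Real.cos (ω * t) + 0) t := by
    intro t; rw [dξ1]; exact sincos_hasDerivAt ω (-q1 * ω) (p1 * ω) 0 t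
  have DD2 : ∀ t, HasDerivAt (deriv ξ2)
      ((-(p2 * ω) * ω) * Real.sin (ω * t) + ((-q2 * ω) * ω) * Real.cos (ω * t) + 0) t := by
    intro t; rw [dξ2]; exact sincos_hasDerivAt ω (-q2 * ω) (p2 * ω) 0 t
  have ddξ1 : deriv (deriv ξ1) = fun t =>
      (-(p1 * ω) * ω) * Real.sin (ω * t) + ((-q1 * ω) * ω) * Real.cos (ω * t) + 0 :=
    funext fun t => (DD1 t).deriv
  have ddξ2 : deriv (deriv ξ2) = fun t =>
      (-(p2 * ω) * ω) * Real.sin (ω * t) + ((-q2 * ω) * ω) * Real.cos (ω * t) + 0 :=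
    funext fun t => (DD2 t).deriv
  refine ⟨fun t => ⟨(D1 t).differentiableAt, (DD1 t).differentiableAt⟩,
    fun t => ⟨(D2 t).differentiableAt, (DD2 t).differentiableAt⟩, ?_, ?_, ?_, ?_, ?_, ?_⟩
  · intro t
    rw [ddξ1, dξ2]
    simp only [hp1, hq1, hp2, hq2]
    have key1 : -(((1 / c) * (Real.sqrt m * ξ10 * Real.sqrt c)) * ω) * ω
        - (1 / m) * (-(m * ξ10) * ω) = 0 := by
      field_simp
      linear_combination (-(ξ10 * ω)) * hA
    have key2 : ((-(-(1 / c) * ξ20) * ω) * ω)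
        - (1 / m) * ((Real.sqrt m * ξ20 / Real.sqrt c) * ω) = 0 := by
      field_simp
      linear_combination (ξ20 * Real.sqrt c) * hω2 - (ξ20 * c) * hωm
    linear_combination Real.sin (ω * t) * key1 + Real.cos (ω * t) * key2
  · intro t
    rw [ddξ2, dξ1]
    simp only [hp1, hq1, hp2, hq2]
    have key1 : -((Real.sqrt m * ξ20 / Real.sqrt c) * ω) * ω
        + c * (-(-(1 / c) * ξ20) * ω) = 0 := by
      field_simp
      linear_combination (-(ξ20 * ω)) * hωm
    have key2 : (-(m * ξ10) * ω) * ω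
        + c * (((1 / c) * (Real.sqrt m * ξ10 * Real.sqrt c)) * ω) = 0 := by
      field_simp
      linear_combination (-ξ10) * hω2 + ξ10 * hA
    linear_combination Real.sin (ω * t) * key1 + Real.cos (ω * t) * key2
  · rw [hξ1]; simp
  · rw [hξ2]; simp
  · rw [dξ1]
    simp only [mul_zero, Real.sin_zero, Real.cos_zero, hp1]
    field_simp
    linear_combination ξ10 * hA
  · rw [dξ2]
    simp only [mul_zero, Real.sin_zero, Real.cos_zero, hp2]
    field_simp
    linear_combination ξ20 * hωm
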